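/- Let (A, α, ℤ₊^d) be a C*-dynamical system and let L = (L_F)_{F ⊆ [d]} be a T-family for (A, α, ℤ₊^d). Then for every nonempty F ⊆ [d], every a ∈ L_F and every b ∈ A such that α_i(b) ∈ L_∅ for all i ∈ F, one has a·b ∈ L_∅. In other words, L_F · (⋂_{i∈F} α_i^{-1}(L_∅)) ⊆ L_∅, i.e. L_F ⊆ J_F(L_∅) := {a ∈ A : a·(⋂_{i∈F} α_i^{-1}(L_∅)) ⊆ L_∅}. (This is the specialisation to C*-dynamical systems of the paper's Proposition 4.7: a T-family satisfies L_F ⊆ J_F(L_∅, X).) -/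
import Mathlib


/-- `I` is a two-sided ideal of the (possibly non-unital) ring `A`. -/
def IsTwoSidedIdealSet {A : Type*} [NonUnitalNonAssocRing A] (I : Set A) : Prop :=
  (0 : A) ∈ I ∧ (∀ x ∈ I, ∀ y ∈ I, x + y ∈ I) ∧ (∀ x ∈ I, -x ∈ I) ∧
    (∀ a : A, ∀ x ∈ I, a * x ∈ I) ∧ (∀ a : A, ∀ x ∈ I, x * a ∈ I)

/-- For a T-family `L` of a C*-dynamical system `(A, α, ℤ₊^d)` and every
nonempty `F ⊆ [d]`: if `a ∈ L_F` and `b ∈ ⋂_{i ∈ F} α_i⁻¹(L_∅)`, then `a·b ∈ L_∅`;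
i.e. `L_F ⊆ J_F(L_∅) = {a : a·(⋂_{i∈F} α_i⁻¹(L_∅)) ⊆ L_∅}`. -/
theorem stmt_3 {A : Type*} [NonUnitalNormedRing A] [StarRing A] [CStarRing A]
    [NormedSpace ℂ A] [IsScalarTower ℂ A A] [SMulCommClass ℂ A A]
    [CompleteSpace A] [StarModule ℂ A]
    {d : ℕ} (hd : 1 ≤ d) (α : Fin d → (A →⋆ₙₐ[ℂ] A))
    (hcomm : ∀ i j : Fin d, ∀ a : A, α i (α j a) = α j (α i a))
    (L : Finset (Fin d) → Set A)
    (hIdeal : ∀ F, IsClosed (L F) ∧ IsTwoSidedIdealSet (L F))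
    (hT : ∀ F : Finset (Fin d), F ⊂ Finset.univ → ∀ i ∉ F,
      L F = (⇑(α i)) ⁻¹' (L F) ∩ L (insert i F)) :
    ∀ F : Finset (Fin d), F.Nonempty → ∀ a ∈ L F,
      ∀ b : A, (∀ i ∈ F, α i b ∈ L ∅) → a * b ∈ L ∅ := by
  -- First: L ∅ ⊆ L G for every G, by induction on G.
  have hmono : ∀ G : Finset (Fin d), L ∅ ⊆ L G := by
    intro G
    induction G using Finset.strongInduction with
    | _ G ih =>
      rcases G.eq_empty_or_nonempty with rfl | ⟨i, hi⟩
      · exact subset_rfl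
      · have hG' : G.erase i ⊂ G := Finset.erase_ssubset hi
        have h1 : L ∅ ⊆ L (G.erase i) := ih _ hG'
        have hne : G.erase i ⊂ Finset.univ := by
          refine Finset.ssubset_univ_iff.mpr ?_
          intro h
          exact (Finset.notMem_erase i G) (h ▸ Finset.mem_univ i)
        have h2 := hT (G.erase i) hne i (Finset.notMem_erase i G)
        have h3 : L (G.erase i) ⊆ L (insert i (G.erase i)) := by
          rw [h2]; exact Set.inter_subset_right
        rw [Finset.insert_erase hi] at h3
        exact h1.trans h3
  intro F _hF a ha b hb
  -- Downward induction: a*b ∈ L G for all G ⊆ F, by induction on (F \ G).card.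
  have key : ∀ k : ℕ, ∀ G : Finset (Fin d), G ⊆ F → (F \ G).card = k → a * b ∈ L G := by
    intro k
    induction k with
    | zero =>
      intro G hGF hcard
      have : F \ G = ∅ := Finset.card_eq_zero.mp hcard
      have hGF' : G = F :=
        Finset.Subset.antisymm hGF (Finset.sdiff_eq_empty_iff_subset.mp this)
      subst hGF'
      exact (hIdeal G).2.2.2.2.2 b a ha
    | succ k ih =>
      intro G hGF hcard
      have hne : (F \ G).Nonempty := Finset.card_pos.mp (by omega)
      obtain ⟨i, hi⟩ := hne
      have hiF : i ∈ F := (Finset.mem_sdiff.mp hi).1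
      have hiG : i ∉ G := (Finset.mem_sdiff.mp hi).2
      have hGuniv : G ⊂ Finset.univ :=
        Finset.ssubset_univ_iff.mpr (fun h => hiG (h ▸ Finset.mem_univ i))
      rw [hT G hGuniv i hiG]
      constructor
      · -- α i (a*b) ∈ L G
        show α i (a * b) ∈ L G
        rw [map_mul]
        exact (hIdeal G).2.2.2.2.1 (α i a) _ (hmono G (hb i hiF))
      · -- a*b ∈ L (insert i G)
        apply ih (insert i G) (Finset.insert_subset hiF hGF)
        rw [Finset.sdiff_insert]
        rw [Finset.card_erase_of_mem hi, hcard]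
        omega
      
  exact key (F \ ∅).card ∅ (Finset.empty_subset F) rfl
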